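/- Let p be a prime, n ≥ 1, and let Y ⊆ ℚ_p^n be a definable set. Then Y is closed and bounded in ℚ_p^n (equivalently, compact) if and only if the following holds: for every m ≥ 1, every nonempty definable set T ⊆ ℚ_p^m, and every definable set F ⊆ ℚ_p^m × ℚ_p^n such that for each t ∈ T the fiber Y_t = {y ∈ ℚ_p^n : (t,y) ∈ F} is a nonempty subset of Y closed in Y, and such that the family {Y_t : t ∈ T} is downward directed (for all t, t′ ∈ T there is t″ ∈ T with Y_{t″} ⊆ Y_t ∩ Y_{t′}), the intersection ⋂_{t∈T} Y_t is nonempty. -/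

import Mathlib

open FirstOrder

/-- A set `s ⊆ ℚ_p^α` is definable if it is definable with parameters from `ℚ_p`
in the first-order language of rings. -/
def pDefinable (p : ℕ) [Fact p.Prime] {α : Type} (s : Set (α → ℚ_[p])) : Prop :=
  letI := Ring.compatibleRingOfRing ℚ_[p]
  Set.Definable (Set.univ : Set ℚ_[p]) Language.ring s

/-- The fiber `Y_t = {y ∈ ℚ_p^n | (t, y) ∈ F}` of a definable family
`F ⊆ ℚ_p^m × ℚ_p^n` over `t ∈ ℚ_p^m`. -/
def famFiber (p : ℕ) [Fact p.Prime] {m n : ℕ}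
    (F : Set (Fin m ⊕ Fin n → ℚ_[p])) (t : Fin m → ℚ_[p]) :
    Set (Fin n → ℚ_[p]) :=
  {y | Sum.elim t y ∈ F}

section helpers

variable {p : ℕ} [Fact p.Prime]

/-! ### Definability helpers -/

lemma pDef_poly {α : Type} (f : MvPolynomial α ℚ_[p]) :
    pDefinable p {v | MvPolynomial.eval v f = 0} := by
  letI := Ring.compatibleRingOfRing ℚ_[p]
  have h := FirstOrder.Ring.mvPolynomial_zeroLocus_definable ({f} : Finset (MvPolynomial α ℚ_[p]))
  have h2 := h.mono (Set.subset_univ _)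
  unfold pDefinable
  convert h2 using 1
  ext v
  simp only [Finset.coe_singleton, MvPolynomial.mem_zeroLocus_iff, Set.mem_setOf_eq]
  constructor
  · intro hv g hg
    rw [Ideal.mem_span_singleton] at hg
    obtain ⟨c, rfl⟩ := hg
    simp [hv]
  · intro hv
    exact hv f (Ideal.subset_span (Set.mem_singleton f))

lemma pDef_compl {α : Type} {s : Set (α → ℚ_[p])} (h : pDefinable p s) :
    pDefinable p sᶜ := by
  letI := Ring.compatibleRingOfRing ℚ_[p]
  exact Set.Definable.compl h

lemma pDef_inter {α : Type} {s t : Set (α → ℚ_[p])} (hs : pDefinable p s)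
    (ht : pDefinable p t) : pDefinable p (s ∩ t) := by
  letI := Ring.compatibleRingOfRing ℚ_[p]
  exact Set.Definable.inter hs ht

lemma pDef_iUnion {α : Type} {k : ℕ} {f : Fin k → Set (α → ℚ_[p])}
    (h : ∀ i, pDefinable p (f i)) : pDefinable p (⋃ i, f i) := by
  letI := Ring.compatibleRingOfRing ℚ_[p]
  have := Set.definable_biUnion_finset (A := (Set.univ : Set ℚ_[p]))
    (L := Language.ring) (f := f) (fun i => h i) Finset.univ
  unfold pDefinable
  simpa using this

lemma pDef_iInter {α : Type} {k : ℕ} {f : Fin k → Set (α → ℚ_[p])}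
    (h : ∀ i, pDefinable p (f i)) : pDefinable p (⋂ i, f i) := by
  letI := Ring.compatibleRingOfRing ℚ_[p]
  have := Set.definable_biInter_finset (A := (Set.univ : Set ℚ_[p]))
    (L := Language.ring) (f := f) (fun i => h i) Finset.univ
  unfold pDefinable
  simpa using this

lemma pDef_preimage_comp {α β : Type} (g : α → β) {s : Set (α → ℚ_[p])}
    (h : pDefinable p s) : pDefinable p ((fun v : β → ℚ_[p] => v ∘ g) ⁻¹' s) := by
  letI := Ring.compatibleRingOfRing ℚ_[p]
  exact Set.Definable.preimage_comp g h

lemma pDef_exists {α : Type} (k : ℕ) {S : Set ((α ⊕ Fin k) → ℚ_[p])}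
    (h : pDefinable p S) :
    pDefinable p {v : α → ℚ_[p] | ∃ u : Fin k → ℚ_[p], Sum.elim v u ∈ S} := by
  letI := Ring.compatibleRingOfRing ℚ_[p]
  have h2 := Set.Definable.image_comp_sumInl_fin (A := (Set.univ : Set ℚ_[p])) k h
  unfold pDefinable
  convert h2 using 1
  ext v
  simp only [Set.mem_setOf_eq, Set.mem_image]
  constructor
  · rintro ⟨u, hu⟩
    exact ⟨Sum.elim v u, hu, Sum.elim_comp_inl v u⟩
  · rintro ⟨g, hg, rfl⟩
    exact ⟨g ∘ Sum.inr, by rwa [Sum.elim_comp_inl_inr]⟩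

/-! ### The existential definition of the valuation ring -/

lemma zp_of_sq (z : ℚ_[p]) : (∃ w : ℚ_[p], w ^ 2 = 1 + (p : ℚ_[p]) ^ 3 * z ^ 4) ↔ ‖z‖ ≤ 1 := by
  have hp1 : (1 : ℝ) < (p : ℝ) := by exact_mod_cast (Fact.out : p.Prime).one_lt
  have hp0 : (0 : ℝ) < (p : ℝ) := lt_trans one_pos hp1
  constructor
  · rintro ⟨w, hw⟩
    by_contra hz
    push_neg at hz
    have hzne : z ≠ 0 := by
      intro h; rw [h] at hz; simp at hz; linarith
    have hnz : ‖z‖ = (p : ℝ) ^ (-z.valuation) := Padic.norm_eq_zpow_neg_valuation hzne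
    have hvz : z.valuation < 0 := by
      by_contra hv
      push_neg at hv
      have : (p : ℝ) ^ (-z.valuation) ≤ (p:ℝ) ^ (0:ℤ) :=
        zpow_le_zpow_right₀ (le_of_lt hp1) (by omega)
      rw [← hnz] at this
      simp at this; linarith
    have hbig : ‖(p : ℚ_[p]) ^ 3 * z ^ 4‖ = (p : ℝ) ^ (-(3 + 4 * z.valuation)) := by
      rw [norm_mul, norm_pow, norm_pow, Padic.norm_p, hnz]
      rw [inv_pow, ← zpow_natCast (p:ℝ) 3, ← zpow_neg,
        ← zpow_natCast ((p:ℝ) ^ (-z.valuation)) 4, ← zpow_mul, ← zpow_add₀ (ne_of_gt hp0)]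
      congr 1
      push_cast
      ring
    have hone : ‖(1 : ℚ_[p])‖ ≠ ‖(p : ℚ_[p]) ^ 3 * z ^ 4‖ := by
      rw [norm_one, hbig]
      intro h
      have h' : (p:ℝ) ^ (0:ℤ) = (p:ℝ) ^ (-(3 + 4 * z.valuation)) := by
        rw [zpow_zero]; exact h
      have := (zpow_right_inj₀ hp0 (ne_of_gt hp1)).mp h'
      omega
    have hmax : ‖(1 : ℚ_[p]) + (p:ℚ_[p])^3 * z^4‖ = (p:ℝ) ^ (-(3 + 4*z.valuation)) := by
      rw [Padic.add_eq_max_of_ne hone, hbig, norm_one]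
      apply max_eq_right
      calc (1:ℝ) = (p:ℝ)^(0:ℤ) := (zpow_zero _).symm
      _ ≤ _ := zpow_le_zpow_right₀ (le_of_lt hp1) (by omega)
    have hwne : w ≠ 0 := by
      intro h
      rw [h] at hw
      rw [← hw] at hmax
      simp only [ne_eq, OfNat.ofNat_ne_zero, not_false_eq_true, zero_pow, norm_zero] at hmax
      have := zpow_pos hp0 (-(3 + 4 * z.valuation))
      linarith
    have hkey : (p:ℝ) ^ (-w.valuation * 2) = (p:ℝ) ^ (-(3 + 4 * z.valuation)) := by
      rw [← hmax, ← hw, norm_pow, Padic.norm_eq_zpow_neg_valuation hwne, ← zpow_natCast, ← zpow_mul]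
      congr 1
    have := (zpow_right_inj₀ hp0 (ne_of_gt hp1)).mp hkey
    omega
  · intro hz
    set z' : ℤ_[p] := ⟨z, hz⟩ with hz'
    set c : ℤ_[p] := 1 + (p : ℤ_[p]) ^ 3 * z' ^ 4 with hc
    set F : Polynomial ℤ_[p] := Polynomial.X ^ 2 - Polynomial.C c with hF
    have hF1 : F.eval 1 = -((p : ℤ_[p]) ^ 3 * z' ^ 4) := by
      simp [hF, hc]
    have hFd : F.derivative.eval 1 = 2 := by
      simp [hF]
      norm_num
    have hnorm2 : (1 : ℝ) / p ≤ ‖(2 : ℤ_[p])‖ := by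
      by_cases h2 : ‖(2 : ℤ_[p])‖ < 1
      · have hdvd : (p : ℤ) ∣ 2 := by
          have := (PadicInt.norm_int_lt_one_iff_dvd 2).mp (by exact_mod_cast h2)
          exact_mod_cast this
        have hple : p = 2 := by
          have h1 := Int.le_of_dvd (by norm_num) hdvd
          have h2' := (Fact.out : p.Prime).two_le
          omega
        subst hple
        have : ((2:ℕ) : ℤ_[2]) = (2 : ℤ_[2]) := by norm_cast
        rw [← this, PadicInt.norm_p]
        norm_num
      · push_neg at h2
        calc (1:ℝ)/p ≤ 1 := by rw [div_le_one hp0]; linarith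
        _ ≤ _ := h2
    have hlt : ‖F.eval 1‖ < ‖F.derivative.eval 1‖ ^ 2 := by
      rw [hF1, hFd, norm_neg, norm_mul, norm_pow, norm_pow,
        PadicInt.norm_p]
      have hz4 : ‖z'‖ ^ 4 ≤ 1 :=
        pow_le_one₀ (norm_nonneg _) (PadicInt.norm_le_one z')
      have h1 : ((p:ℝ)⁻¹) ^ 3 * ‖z'‖ ^ 4 ≤ ((p:ℝ)⁻¹) ^ 3 := by
        nlinarith [pow_pos (inv_pos.mpr hp0) 3]
      have h2 : ((p:ℝ)⁻¹) ^ 3 < (1/p) ^ 2 := by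
        rw [one_div, pow_succ]
        nlinarith [pow_pos (inv_pos.mpr hp0) 2, inv_lt_one_of_one_lt₀ hp1,
          pow_pos (inv_pos.mpr hp0) 3]
      calc ((p:ℝ)⁻¹) ^ 3 * ‖z'‖ ^ 4 ≤ ((p:ℝ)⁻¹) ^ 3 := h1
      _ < (1/p) ^ 2 := h2
      _ ≤ ‖(2:ℤ_[p])‖ ^ 2 := by
          apply pow_le_pow_left₀ (by positivity) hnorm2
    obtain ⟨w', hw', -⟩ := hensels_lemma hlt
    have hw2 : w' ^ 2 = c := by
      have h0 : w' ^ 2 - c = 0 := by simpa [hF] using hw'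
      exact sub_eq_zero.mp h0
    exact ⟨(w' : ℚ_[p]), by
      have := congrArg (PadicInt.Coe.ringHom (p := p)) hw2
      push_cast [hc] at this ⊢
      change (w' : ℚ_[p]) ^ 2 = 1 + (p:ℚ_[p])^3 * z ^ 4 at this
      simpa [hz'] using this⟩

/-! ### Analytic helpers -/

lemma norm_le_iff_exists (a t : ℚ_[p]) : ‖a‖ ≤ ‖t‖ ↔ ∃ z : ℚ_[p], a = t * z ∧ ‖z‖ ≤ 1 := by
  constructor
  · intro h
    by_cases ht : t = 0
    · subst ht
      refine ⟨0, ?_, by simp⟩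
      simpa using le_antisymm (by simpa using h) (norm_nonneg a)
    · refine ⟨a / t, (mul_div_cancel₀ a ht).symm, ?_⟩
      rw [norm_div, div_le_one (by simpa using ht)]
      exact h
  · rintro ⟨z, rfl, hz⟩
    rw [norm_mul]
    calc ‖t‖ * ‖z‖ ≤ ‖t‖ * 1 := by gcongr
    _ = ‖t‖ := mul_one _

lemma isClosed_one_lt_norm : IsClosed {a : ℚ_[p] | 1 < ‖a‖} := by
  rw [← isOpen_compl_iff]
  have : {a : ℚ_[p] | 1 < ‖a‖}ᶜ = (fun a : ℚ_[p] => ‖a‖) ⁻¹' Set.Iio ((p:ℝ) ^ ((0:ℤ)+1)) := by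
    ext a
    simp only [Set.mem_compl_iff, Set.mem_setOf_eq, not_lt, Set.mem_preimage, Set.mem_Iio]
    rw [← Padic.norm_le_pow_iff_norm_lt_pow_add_one]
    simp
  rw [this]
  exact isOpen_Iio.preimage continuous_norm

lemma isClosed_of_subtype {n : ℕ} {Y S : Set (Fin n → ℚ_[p])} (hY : IsClosed Y)
    (hSY : S ⊆ Y) (hS : IsClosed (Subtype.val ⁻¹' S : Set Y)) : IsClosed S := by
  have : S = Subtype.val '' (Subtype.val ⁻¹' S : Set Y) := by
    rw [Subtype.image_preimage_coe]
    exact (Set.inter_eq_self_of_subset_right hSY).symm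
  rw [this]
  exact hY.isClosedMap_subtype_val _ hS

end helpers

theorem k_cb_and_cb_k (p : ℕ) [Fact p.Prime] (n : ℕ) (hn : 1 ≤ n)
    (Y : Set (Fin n → ℚ_[p])) (hYdef : pDefinable p Y) :
    (IsClosed Y ∧ Bornology.IsBounded Y) ↔
      (∀ m : ℕ, 1 ≤ m →
        ∀ T : Set (Fin m → ℚ_[p]), T.Nonempty → pDefinable p T →
        ∀ F : Set (Fin m ⊕ Fin n → ℚ_[p]), pDefinable p F →
        (∀ t ∈ T, (famFiber p F t).Nonempty ∧ famFiber p F t ⊆ Y ∧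
          IsClosed (Subtype.val ⁻¹' famFiber p F t : Set Y)) →
        (∀ t ∈ T, ∀ t' ∈ T, ∃ t'' ∈ T,
          famFiber p F t'' ⊆ famFiber p F t ∩ famFiber p F t') →
        (⋂ t ∈ T, famFiber p F t).Nonempty) := by
  have hp1 : (1 : ℝ) < (p : ℝ) := by exact_mod_cast (Fact.out : p.Prime).one_lt
  have hp0 : (0 : ℝ) < (p : ℝ) := lt_trans one_pos hp1
  have hpQ : (p : ℚ_[p]) ≠ 0 := by
    exact_mod_cast Nat.cast_ne_zero.mpr (Fact.out : p.Prime).ne_zero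
  constructor
  · rintro ⟨hcl, hbd⟩ m hm T hTne hTdef F hFdef hfib hdir
    have hK : IsCompact Y := Metric.isCompact_of_isClosed_isBounded hcl hbd
    haveI : Nonempty T := hTne.to_subtype
    have hne : (⋂ t : T, famFiber p F (t : Fin m → ℚ_[p])).Nonempty := by
      apply IsCompact.nonempty_iInter_of_directed_nonempty_isCompact_isClosed
        (fun t : T => famFiber p F (t : Fin m → ℚ_[p]))
      · intro t t'
        obtain ⟨t'', ht''T, hsub⟩ := hdir t t.2 t' t'.2
        rw [Set.subset_inter_iff] at hsub
        exact ⟨⟨t'', ht''T⟩, hsub.1, hsub.2⟩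
      · exact fun t => (hfib t t.2).1
      · intro t
        exact hK.of_isClosed_subset
          (isClosed_of_subtype hcl (hfib t t.2).2.1 (hfib t t.2).2.2) (hfib t t.2).2.1
      · exact fun t => isClosed_of_subtype hcl (hfib t t.2).2.1 (hfib t t.2).2.2
    rwa [Set.biInter_eq_iInter]
  · intro H
    -- the common index set
    set T : Set (Fin 1 → ℚ_[p]) := {t | t 0 ≠ 0} with hT
    have hTne : T.Nonempty := ⟨fun _ => 1, by simp [hT]⟩
    have hTdef : pDefinable p T := by
      have : T = {v : Fin 1 → ℚ_[p] | MvPolynomial.eval v (MvPolynomial.X 0) = 0}ᶜ := by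
        ext v
        simp [hT]
      rw [this]
      exact pDef_compl (pDef_poly _)
    constructor
    · -- closedness
      rw [← closure_subset_iff_isClosed]
      intro x hx
      by_contra hxY
      set F : Set (Fin 1 ⊕ Fin n → ℚ_[p]) :=
        {v | v ∘ Sum.inr ∈ Y ∧ ∀ i, ‖v (Sum.inr i) - x i‖ ≤ ‖v (Sum.inl 0)‖} with hFdefn
      have hfam : ∀ (t : Fin 1 → ℚ_[p]) (y : Fin n → ℚ_[p]),
          y ∈ famFiber p F t ↔ y ∈ Y ∧ ∀ i, ‖y i - x i‖ ≤ ‖t 0‖ := by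
        intro t y
        show Sum.elim t y ∈ F ↔ _
        rw [hFdefn]
        simp [Sum.elim_comp_inr]
      have hFdef : pDefinable p F := by
        have h1 : pDefinable p ((fun v : Fin 1 ⊕ Fin n → ℚ_[p] => v ∘ Sum.inr) ⁻¹' Y) :=
          pDef_preimage_comp Sum.inr hYdef
        have h2 : ∀ i : Fin n, pDefinable p
            {v : Fin 1 ⊕ Fin n → ℚ_[p] | ‖v (Sum.inr i) - x i‖ ≤ ‖v (Sum.inl 0)‖} := by
          intro i
          have heq : {v : Fin 1 ⊕ Fin n → ℚ_[p] | ‖v (Sum.inr i) - x i‖ ≤ ‖v (Sum.inl 0)‖}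
              = {v : Fin 1 ⊕ Fin n → ℚ_[p] | ∃ u : Fin 2 → ℚ_[p], Sum.elim v u ∈
                  ({w | MvPolynomial.eval w
                      (MvPolynomial.X (Sum.inl (Sum.inr i)) - MvPolynomial.C (x i)
                        - MvPolynomial.X (Sum.inl (Sum.inl 0)) * MvPolynomial.X (Sum.inr 0)) = 0}
                    ∩ {w | MvPolynomial.eval w
                      (MvPolynomial.X (Sum.inr 1) ^ 2
                        - (1 + MvPolynomial.C ((p:ℚ_[p])^3) * MvPolynomial.X (Sum.inr 0) ^ 4)) = 0})} := by
            ext v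
            simp only [Set.mem_setOf_eq, Set.mem_inter_iff, map_sub, map_mul, map_add,
              map_pow, map_one, MvPolynomial.eval_X, MvPolynomial.eval_C, Sum.elim_inl,
              Sum.elim_inr]
            rw [norm_le_iff_exists]
            constructor
            · rintro ⟨z, hz, hz1⟩
              obtain ⟨w, hw⟩ := (zp_of_sq z).mpr hz1
              refine ⟨![z, w], ?_, ?_⟩ <;> simp [hz, hw]
            · rintro ⟨u, h1, h2⟩
              exact ⟨u 0, sub_eq_zero.mp h1,
                (zp_of_sq (u 0)).mp ⟨u 1, sub_eq_zero.mp h2⟩⟩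
          rw [heq]
          exact pDef_exists 2 (pDef_inter (pDef_poly _) (pDef_poly _))
        have hFeq : F = (fun v : Fin 1 ⊕ Fin n → ℚ_[p] => v ∘ Sum.inr) ⁻¹' Y ∩
            ⋂ i, {v : Fin 1 ⊕ Fin n → ℚ_[p] | ‖v (Sum.inr i) - x i‖ ≤ ‖v (Sum.inl 0)‖} := by
          ext v
          simp [hFdefn, Set.mem_iInter]
        rw [hFeq]
        exact pDef_inter h1 (pDef_iInter h2)
      have hfib : ∀ t ∈ T, (famFiber p F t).Nonempty ∧ famFiber p F t ⊆ Y ∧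
          IsClosed (Subtype.val ⁻¹' famFiber p F t : Set Y) := by
        intro t ht
        have htpos : (0:ℝ) < ‖t 0‖ := norm_pos_iff.mpr ht
        refine ⟨?_, fun y hy => ((hfam t y).mp hy).1, ?_⟩
        · obtain ⟨y, hyY, hyd⟩ := Metric.mem_closure_iff.mp hx ‖t 0‖ htpos
          refine ⟨y, (hfam t y).mpr ⟨hyY, fun i => ?_⟩⟩
          have h1 : dist (y i) (x i) ≤ dist y x := dist_le_pi_dist y x i
          rw [dist_eq_norm] at h1
          calc ‖y i - x i‖ ≤ dist y x := h1
          _ = dist x y := dist_comm y x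
          _ ≤ ‖t 0‖ := le_of_lt hyd
        · have heq2 : (Subtype.val ⁻¹' famFiber p F t : Set Y) = Subtype.val ⁻¹'
              (⋂ i, (fun y : Fin n → ℚ_[p] => y i - x i) ⁻¹' Metric.closedBall 0 ‖t 0‖) := by
            ext ⟨y, hy⟩
            simp [hfam, hy, Metric.mem_closedBall, dist_eq_norm]
          rw [heq2]
          apply IsClosed.preimage continuous_subtype_val
          apply isClosed_iInter
          intro i
          exact Metric.isClosed_closedBall.preimage ((continuous_apply i).sub continuous_const)
      have hdir : ∀ t ∈ T, ∀ t' ∈ T, ∃ t'' ∈ T,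
          famFiber p F t'' ⊆ famFiber p F t ∩ famFiber p F t' := by
        intro t ht t' ht'
        by_cases hcmp : ‖t 0‖ ≤ ‖t' 0‖
        · refine ⟨t, ht, fun y hy => ⟨hy, ?_⟩⟩
          obtain ⟨hyY, hyb⟩ := (hfam t y).mp hy
          exact (hfam t' y).mpr ⟨hyY, fun i => le_trans (hyb i) hcmp⟩
        · push_neg at hcmp
          refine ⟨t', ht', fun y hy => ⟨?_, hy⟩⟩
          obtain ⟨hyY, hyb⟩ := (hfam t' y).mp hy
          exact (hfam t y).mpr ⟨hyY, fun i => le_trans (hyb i) (le_of_lt hcmp)⟩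
      obtain ⟨y, hy⟩ := H 1 le_rfl T hTne hTdef F hFdef hfib hdir
      simp only [Set.mem_iInter] at hy
      have hyY : y ∈ Y := by
        have := (hfam (fun _ => 1) y).mp (hy (fun _ => 1) (by simp [hT]))
        exact this.1
      have hyx : y = x := by
        funext i
        have hz : ‖y i - x i‖ = 0 := by
          by_contra hne
          have hpos : 0 < ‖y i - x i‖ :=
            lt_of_le_of_ne (norm_nonneg _) (Ne.symm hne)
          obtain ⟨k, hk⟩ := exists_pow_lt_of_lt_one hpos
            (show (p:ℝ)⁻¹ < 1 by rw [inv_lt_one₀ hp0]; exact hp1)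
          have htk : (fun _ : Fin 1 => (p:ℚ_[p]) ^ k) ∈ T := by
            simp [hT, pow_ne_zero, hpQ]
          have := ((hfam _ y).mp (hy _ htk)).2 i
          rw [norm_pow, Padic.norm_p] at this
          linarith
        have := norm_eq_zero.mp hz
        exact sub_eq_zero.mp this
      exact hxY (hyx ▸ hyY)
    · -- boundedness
      by_contra hub
      rw [isBounded_iff_forall_norm_le] at hub
      push_neg at hub
      set F : Set (Fin 1 ⊕ Fin n → ℚ_[p]) :=
        {v | v ∘ Sum.inr ∈ Y ∧ ∃ i, 1 < ‖v (Sum.inl 0) * v (Sum.inr i)‖} with hFdefn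
      have hfam : ∀ (t : Fin 1 → ℚ_[p]) (y : Fin n → ℚ_[p]),
          y ∈ famFiber p F t ↔ y ∈ Y ∧ ∃ i, 1 < ‖t 0 * y i‖ := by
        intro t y
        show Sum.elim t y ∈ F ↔ _
        rw [hFdefn]
        simp [Sum.elim_comp_inr]
      have hFdef : pDefinable p F := by
        have h1 : pDefinable p ((fun v : Fin 1 ⊕ Fin n → ℚ_[p] => v ∘ Sum.inr) ⁻¹' Y) :=
          pDef_preimage_comp Sum.inr hYdef
        have h2 : ∀ i : Fin n, pDefinable p
            {v : Fin 1 ⊕ Fin n → ℚ_[p] | 1 < ‖v (Sum.inl 0) * v (Sum.inr i)‖} := by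
          intro i
          have heq : {v : Fin 1 ⊕ Fin n → ℚ_[p] | 1 < ‖v (Sum.inl 0) * v (Sum.inr i)‖}
              = {v : Fin 1 ⊕ Fin n → ℚ_[p] | ∃ u : Fin 1 → ℚ_[p], Sum.elim v u ∈
                  {w | MvPolynomial.eval w
                    (MvPolynomial.X (Sum.inr 0) ^ 2
                      - (1 + MvPolynomial.C ((p:ℚ_[p])^3)
                        * (MvPolynomial.X (Sum.inl (Sum.inl 0))
                            * MvPolynomial.X (Sum.inl (Sum.inr i))) ^ 4)) = 0}}ᶜ := by
            ext v
            simp only [Set.mem_setOf_eq, Set.mem_compl_iff, map_sub, map_mul, map_add,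
              map_pow, map_one, MvPolynomial.eval_X, MvPolynomial.eval_C, Sum.elim_inl,
              Sum.elim_inr, not_exists]
            constructor
            · intro h u hu
              have := (zp_of_sq (v (Sum.inl 0) * v (Sum.inr i))).mp
                ⟨u 0, sub_eq_zero.mp hu⟩
              linarith
            · intro h
              by_contra hle
              push_neg at hle
              obtain ⟨w, hw⟩ := (zp_of_sq (v (Sum.inl 0) * v (Sum.inr i))).mpr hle
              exact h (fun _ => w) (sub_eq_zero.mpr hw)
          rw [heq]
          exact pDef_compl (pDef_exists 1 (pDef_poly _))
        have hFeq : F = (fun v : Fin 1 ⊕ Fin n → ℚ_[p] => v ∘ Sum.inr) ⁻¹' Y ∩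
            ⋃ i, {v : Fin 1 ⊕ Fin n → ℚ_[p] | 1 < ‖v (Sum.inl 0) * v (Sum.inr i)‖} := by
          ext v
          simp [hFdefn, Set.mem_iUnion]
        rw [hFeq]
        exact pDef_inter h1 (pDef_iUnion h2)
      have hfib : ∀ t ∈ T, (famFiber p F t).Nonempty ∧ famFiber p F t ⊆ Y ∧
          IsClosed (Subtype.val ⁻¹' famFiber p F t : Set Y) := by
        intro t ht
        have htne : t 0 ≠ 0 := ht
        have htpos : (0:ℝ) < ‖t 0‖ := norm_pos_iff.mpr htne
        refine ⟨?_, fun y hy => ((hfam t y).mp hy).1, ?_⟩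
        · obtain ⟨y, hyY, hygt⟩ := hub ‖(t 0)⁻¹‖
          have hex : ∃ i, ‖(t 0)⁻¹‖ < ‖y i‖ := by
            by_contra hc
            push_neg at hc
            have : ‖y‖ ≤ ‖(t 0)⁻¹‖ :=
              (pi_norm_le_iff_of_nonneg (norm_nonneg _)).mpr hc
            linarith
          obtain ⟨i, hi⟩ := hex
          refine ⟨y, (hfam t y).mpr ⟨hyY, i, ?_⟩⟩
          rw [norm_mul]
          rw [norm_inv] at hi
          calc (1:ℝ) = ‖t 0‖ * ‖t 0‖⁻¹ := (mul_inv_cancel₀ (ne_of_gt htpos)).symm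
          _ < ‖t 0‖ * ‖y i‖ := by
              exact mul_lt_mul_of_pos_left hi htpos
        · have heq2 : (Subtype.val ⁻¹' famFiber p F t : Set Y) = Subtype.val ⁻¹'
              (⋃ i, (fun y : Fin n → ℚ_[p] => t 0 * y i) ⁻¹' {a : ℚ_[p] | 1 < ‖a‖}) := by
            ext ⟨y, hy⟩
            simp [hfam, hy, Set.mem_iUnion]
          rw [heq2]
          apply IsClosed.preimage continuous_subtype_val
          apply isClosed_iUnion_of_finite
          intro i
          exact isClosed_one_lt_norm.preimage (continuous_const.mul (continuous_apply i))
      have hdir : ∀ t ∈ T, ∀ t' ∈ T, ∃ t'' ∈ T,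
          famFiber p F t'' ⊆ famFiber p F t ∩ famFiber p F t' := by
        intro t ht t' ht'
        have key : ∀ s s' : Fin 1 → ℚ_[p], ‖s 0‖ ≤ ‖s' 0‖ →
            famFiber p F s ⊆ famFiber p F s' := by
          intro s s' hss y hy
          obtain ⟨hyY, i, hi⟩ := (hfam s y).mp hy
          refine (hfam s' y).mpr ⟨hyY, i, ?_⟩
          rw [norm_mul] at hi ⊢
          calc (1:ℝ) < ‖s 0‖ * ‖y i‖ := hi
          _ ≤ ‖s' 0‖ * ‖y i‖ := mul_le_mul_of_nonneg_right hss (norm_nonneg _)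
        by_cases hcmp : ‖t 0‖ ≤ ‖t' 0‖
        · exact ⟨t, ht, fun y hy => ⟨hy, key t t' hcmp hy⟩⟩
        · push_neg at hcmp
          exact ⟨t', ht', fun y hy => ⟨key t' t (le_of_lt hcmp) hy, hy⟩⟩
      obtain ⟨y, hy⟩ := H 1 le_rfl T hTne hTdef F hFdef hfib hdir
      simp only [Set.mem_iInter] at hy
      obtain ⟨k, hk⟩ := pow_unbounded_of_one_lt ‖y‖ hp1
      have htk : (fun _ : Fin 1 => (p:ℚ_[p]) ^ k) ∈ T := by
        simp [hT, pow_ne_zero, hpQ]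
      obtain ⟨-, i, hi⟩ := (hfam _ y).mp (hy _ htk)
      rw [norm_mul, norm_pow, Padic.norm_p] at hi
      have hyi : ‖y i‖ ≤ ‖y‖ := norm_le_pi_norm y i
      have hppos : (0:ℝ) < ((p:ℝ)⁻¹) ^ k := pow_pos (inv_pos.mpr hp0) k
      have : (1:ℝ) < ((p:ℝ)⁻¹) ^ k * (p:ℝ) ^ k := by
        calc (1:ℝ) < ((p:ℝ)⁻¹) ^ k * ‖y i‖ := hi
        _ ≤ ((p:ℝ)⁻¹) ^ k * ‖y‖ := mul_le_mul_of_nonneg_left hyi (le_of_lt hppos)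
        _ ≤ ((p:ℝ)⁻¹) ^ k * (p:ℝ) ^ k :=
            mul_le_mul_of_nonneg_left (le_of_lt hk) (le_of_lt hppos)
      rw [inv_pow, inv_mul_cancel₀ (ne_of_gt (pow_pos hp0 k))] at this
      exact lt_irrefl _ this
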